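/- Let λ₁ ≠ λ₂ be nonzero complex numbers, σ₁, σ₂ nonzero complex numbers. Suppose v is a nonzero element of ℂ[X,Y]⊗ℂ[X₁,Y₁] of degree (0,0,0,t') with t' > 0 in the total order on ℕ⁴ (ordered by total weight, then 4th, 3rd, 2nd, 1st coordinates). Define I_m v by the diagonal action I_m(f⊗g) = λ₁^m σ₁ f(X-1,Y-m)⊗g + λ₂^m σ₂ f⊗g(X₁-1,Y₁-m). Then there exists m ∈ {0,1,2,3} such that I_m v - λ₁^m σ₁ v - λ₂^m σ₂ v is nonzero of degree (0,0,0,t'-1). -/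

import Mathlib

open MvPolynomial

/-- The key of the total order `≻` on `ℕ⁴` from the paper: compare first by total weight,
then by the 4th, 3rd, 2nd and 1st coordinates, lexicographically. -/
def degKey (a : Fin 4 → ℕ) : ℕ ×ₗ ℕ ×ₗ ℕ ×ₗ ℕ ×ₗ ℕ :=
  toLex (a 0 + a 1 + a 2 + a 3, toLex (a 3, toLex (a 2, toLex (a 1, a 0))))

/-- `v` (an element of `ℂ[X,Y] ⊗ ℂ[X₁,Y₁]`, identified with `ℂ[X,Y,X₁,Y₁]`) is nonzero of
degree `d` with respect to the total order `≻` on `ℕ⁴`: the coefficient at `d` is nonzero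
and every exponent vector in the support is `≼ d`. -/
def hasDeg (v : MvPolynomial (Fin 4) ℂ) (d : Fin 4 → ℕ) : Prop :=
  MvPolynomial.coeff (Finsupp.equivFunOnFinite.symm d) v ≠ 0 ∧
    ∀ a ∈ v.support, degKey ⇑a ≤ degKey d

/-- The diagonal action of `I_m` on `ℂ[X,Y] ⊗ ℂ[X₁,Y₁]` (identified with `ℂ[X,Y,X₁,Y₁]`):
`I_m(f ⊗ g) = λ₁^m σ₁ f(X-1, Y-m) ⊗ g + λ₂^m σ₂ f ⊗ g(X₁-1, Y₁-m)`. -/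
noncomputable def Iop (l1 l2 s1 s2 : ℂ) (m : ℤ) :
    MvPolynomial (Fin 4) ℂ →ₗ[ℂ] MvPolynomial (Fin 4) ℂ :=
  (l1 ^ m * s1) • (aeval ![X 0 - 1, X 1 - C (m : ℂ), X 2, X 3] :
      MvPolynomial (Fin 4) ℂ →ₐ[ℂ] MvPolynomial (Fin 4) ℂ).toLinearMap +
  (l2 ^ m * s2) • (aeval ![X 0, X 1, X 2 - 1, X 3 - C (m : ℂ)] :
      MvPolynomial (Fin 4) ℂ →ₐ[ℂ] MvPolynomial (Fin 4) ℂ).toLinearMap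

lemma auxPow (i : Fin 4) (c : ℂ) (k : ℕ) :
    ((X i - C c)^k : MvPolynomial (Fin 4) ℂ).totalDegree ≤ k := by
  refine le_trans (totalDegree_pow _ _) ?_
  have h1 : (X i - C c : MvPolynomial (Fin 4) ℂ).totalDegree ≤ 1 := by
    refine le_trans (totalDegree_sub_C_le _ _) ?_
    simp [totalDegree_X]
  calc k * (X i - C c : MvPolynomial (Fin 4) ℂ).totalDegree ≤ k * 1 := Nat.mul_le_mul_left _ h1
  _ = k := by omega

lemma auxU (i : Fin 4) (c : ℂ) (k : ℕ) :
    ((X i - C c)^k - X i ^ k : MvPolynomial (Fin 4) ℂ).totalDegree ≤ k - 1 := by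
  induction k with
  | zero => simp
  | succ k ih =>
    have key : ((X i - C c)^(k+1) - X i ^ (k+1) : MvPolynomial (Fin 4) ℂ)
        = (X i - C c) * ((X i - C c)^k - X i ^ k) + (- C c) * X i ^ k := by ring
    rw [key]
    refine le_trans (totalDegree_add _ _) ?_
    simp only [max_le_iff]
    constructor
    · rcases Nat.eq_zero_or_pos k with hk | hk
      · subst hk; simp
      · refine le_trans (totalDegree_mul _ _) ?_
        have h1 : (X i - C c : MvPolynomial (Fin 4) ℂ).totalDegree ≤ 1 := by
          refine le_trans (totalDegree_sub_C_le _ _) ?_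
          simp [totalDegree_X]
        omega
    · refine le_trans (totalDegree_mul _ _) ?_
      have h2 : (-C c : MvPolynomial (Fin 4) ℂ).totalDegree = 0 := by
        simp [totalDegree_neg]
      rw [h2, totalDegree_X_pow]
      omega

lemma tdMul4 {p q r s : MvPolynomial (Fin 4) ℂ} {bp bq br bs : ℕ}
    (hp : p.totalDegree ≤ bp) (hq : q.totalDegree ≤ bq) (hr : r.totalDegree ≤ br)
    (hs : s.totalDegree ≤ bs) : (p*q*r*s).totalDegree ≤ bp+bq+br+bs :=
  le_trans (totalDegree_mul _ _) (add_le_add (le_trans (totalDegree_mul _ _)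
    (add_le_add (le_trans (totalDegree_mul _ _) (add_le_add hp hq)) hr)) hs)

lemma tdXpow (i : Fin 4) (k : ℕ) : ((X i : MvPolynomial (Fin 4) ℂ) ^ k).totalDegree ≤ k :=
  le_of_eq (totalDegree_X_pow _ _)

lemma auxProd (c : Fin 4 → ℂ) (a : Fin 4 → ℕ) (n : ℕ) (ha : a 0 + a 1 + a 2 + a 3 ≤ n) :
    ((∏ i, (X i - C (c i)) ^ a i) - ∏ i, (X i : MvPolynomial (Fin 4) ℂ) ^ a i).totalDegree
      ≤ n - 1 := by
  rw [Fin.prod_univ_four, Fin.prod_univ_four]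
  have key : ((X 0 - C (c 0))^(a 0) * (X 1 - C (c 1))^(a 1) * (X 2 - C (c 2))^(a 2) * (X 3 - C (c 3))^(a 3)
      - X 0 ^ a 0 * X 1 ^ a 1 * X 2 ^ a 2 * (X 3 : MvPolynomial (Fin 4) ℂ) ^ a 3)
      = ((X 0 - C (c 0))^(a 0) - X 0 ^ a 0) * (X 1 - C (c 1))^(a 1) * (X 2 - C (c 2))^(a 2) * (X 3 - C (c 3))^(a 3)
      + X 0 ^ a 0 * ((X 1 - C (c 1))^(a 1) - X 1 ^ a 1) * (X 2 - C (c 2))^(a 2) * (X 3 - C (c 3))^(a 3)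
      + X 0 ^ a 0 * X 1 ^ a 1 * ((X 2 - C (c 2))^(a 2) - X 2 ^ a 2) * (X 3 - C (c 3))^(a 3)
      + X 0 ^ a 0 * X 1 ^ a 1 * X 2 ^ a 2 * ((X 3 - C (c 3))^(a 3) - X 3 ^ a 3) := by ring
  rw [key]
  refine le_trans (totalDegree_add _ _) (max_le (le_trans (totalDegree_add _ _) (max_le
    (le_trans (totalDegree_add _ _) (max_le ?_ ?_)) ?_)) ?_)
  · rcases Nat.eq_zero_or_pos (a 0) with h | h
    · simp [h]
    · exact le_trans (tdMul4 (auxU 0 (c 0) (a 0)) (auxPow 1 (c 1) (a 1)) (auxPow 2 (c 2) (a 2))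
        (auxPow 3 (c 3) (a 3))) (by omega)
  · rcases Nat.eq_zero_or_pos (a 1) with h | h
    · simp [h]
    · exact le_trans (tdMul4 (tdXpow 0 (a 0)) (auxU 1 (c 1) (a 1)) (auxPow 2 (c 2) (a 2))
        (auxPow 3 (c 3) (a 3))) (by omega)
  · rcases Nat.eq_zero_or_pos (a 2) with h | h
    · simp [h]
    · exact le_trans (tdMul4 (tdXpow 0 (a 0)) (tdXpow 1 (a 1)) (auxU 2 (c 2) (a 2))
        (auxPow 3 (c 3) (a 3))) (by omega)
  · rcases Nat.eq_zero_or_pos (a 3) with h | h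
    · simp [h]
    · exact le_trans (tdMul4 (tdXpow 0 (a 0)) (tdXpow 1 (a 1)) (tdXpow 2 (a 2))
        (auxU 3 (c 3) (a 3))) (by omega)

lemma tdSub (c : Fin 4 → ℂ) (v : MvPolynomial (Fin 4) ℂ) (n : ℕ)
    (hv : ∀ a ∈ v.support, a 0 + a 1 + a 2 + a 3 ≤ n) :
    ((aeval (fun i => X i - C (c i)) : MvPolynomial (Fin 4) ℂ →ₐ[ℂ] MvPolynomial (Fin 4) ℂ) v
      - v).totalDegree ≤ n - 1 := by
  conv_lhs => rw [v.as_sum]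
  rw [map_sum, ← Finset.sum_sub_distrib]
  refine le_trans (totalDegree_finset_sum _ _) (Finset.sup_le fun a ha => ?_)
  have e1 : (aeval (fun i => X i - C (c i)) : MvPolynomial (Fin 4) ℂ →ₐ[ℂ] MvPolynomial (Fin 4) ℂ)
      (monomial a (coeff a v)) = C (coeff a v) * ∏ i, (X i - C (c i)) ^ a i := by
    rw [aeval_monomial, Finsupp.prod_fintype]
    · rfl
    · intro i; exact pow_zero _
  have e2 : (monomial a (coeff a v) : MvPolynomial (Fin 4) ℂ)
      = C (coeff a v) * ∏ i, (X i : MvPolynomial (Fin 4) ℂ) ^ a i := by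
    rw [monomial_eq, Finsupp.prod_fintype]
    intro i; exact pow_zero _
  rw [e1, e2, ← mul_sub]
  refine le_trans (totalDegree_mul _ _) ?_
  have := auxProd c (⇑a) n (hv a ha)
  simp only [totalDegree_C, zero_add]
  exact this

lemma eqd_iff (a : Fin 4 →₀ ℕ) (f : Fin 4 → ℕ) :
    a = Finsupp.equivFunOnFinite.symm f ↔ (a 0 = f 0 ∧ a 1 = f 1 ∧ a 2 = f 2 ∧ a 3 = f 3) := by
  rw [Equiv.eq_symm_apply]
  constructor
  · intro h
    exact ⟨congrFun h 0, congrFun h 1, congrFun h 2, congrFun h 3⟩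
  · rintro ⟨h0, h1, h2, h3⟩
    funext i
    fin_cases i <;> assumption

lemma coeff_0003 (k : ℕ) (q : MvPolynomial (Fin 4) ℂ) :
    MvPolynomial.coeff (Finsupp.equivFunOnFinite.symm ![0,0,0,k]) q
      = ((aeval ![0,0,0,Polynomial.X] : MvPolynomial (Fin 4) ℂ →ₐ[ℂ] Polynomial ℂ) q).coeff k := by
  conv_lhs => rw [q.as_sum]
  conv_rhs => rw [q.as_sum]
  rw [map_sum, Polynomial.finset_sum_coeff]
  rw [MvPolynomial.coeff_sum]
  refine Finset.sum_congr rfl fun a _ => ?_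
  rw [coeff_monomial, aeval_monomial, Finsupp.prod_fintype _ _ (fun i => pow_zero _),
    Fin.prod_univ_four]
  simp only [Matrix.cons_val_zero, Matrix.cons_val_one, Matrix.head_cons,
    Matrix.cons_val_two, Matrix.tail_cons, Matrix.cons_val_three]
  by_cases h0 : a 0 = 0
  · by_cases h1 : a 1 = 0
    · by_cases h2 : a 2 = 0
      · rw [h0, h1, h2]
        simp only [pow_zero, one_mul, mul_one]
        rw [Polynomial.algebraMap_eq, Polynomial.coeff_C_mul, Polynomial.coeff_X_pow]
        simp only [eqd_iff]
        simp only [h0, h1, h2, Matrix.cons_val_zero, Matrix.cons_val_one, Matrix.head_cons,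
          Matrix.cons_val_two, Matrix.tail_cons, Matrix.cons_val_three, true_and]
        by_cases h3 : a 3 = k
        · simp [h3]
        · rw [if_neg h3, if_neg (fun h => h3 h.symm), mul_zero]
      · rw [if_neg, zero_pow h2]
        · simp
        · rw [eqd_iff]; simp [h2]
    · rw [if_neg, zero_pow h1]
      · simp
      · rw [eqd_iff]; simp [h1]
  · rw [if_neg, zero_pow h0]
    · simp
    · rw [eqd_iff]; simp [h0]

lemma key_sum_le {a : Fin 4 → ℕ} {n : ℕ} (h : degKey a ≤ degKey ![0,0,0,n]) :
    a 0 + a 1 + a 2 + a 3 ≤ n := by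
  unfold degKey at h
  rw [Prod.Lex.le_iff] at h
  simp only [Matrix.cons_val_zero, Matrix.cons_val_one, Matrix.head_cons, Matrix.cons_val_two,
    Matrix.tail_cons, Matrix.cons_val_three, ofLex_toLex] at h
  rcases h with h | ⟨h, _⟩ <;> omega

lemma key_le_of_sum {a : Fin 4 → ℕ} {n : ℕ} (h : a 0 + a 1 + a 2 + a 3 ≤ n) :
    degKey a ≤ degKey ![0,0,0,n] := by
  unfold degKey
  rw [Prod.Lex.le_iff]
  simp only [Matrix.cons_val_zero, Matrix.cons_val_one, Matrix.head_cons, Matrix.cons_val_two,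
    Matrix.tail_cons, Matrix.cons_val_three, zero_add]
  rcases Nat.lt_or_ge (a 0 + a 1 + a 2 + a 3) n with h' | h'
  · exact Or.inl h'
  · have he : a 0 + a 1 + a 2 + a 3 = n := le_antisymm h h'
    refine Or.inr ⟨he, ?_⟩
    rw [Prod.Lex.le_iff]
    rcases Nat.lt_or_ge (a 3) n with h3 | h3
    · exact Or.inl h3
    · have : a 0 = 0 ∧ a 1 = 0 ∧ a 2 = 0 ∧ a 3 = n := by omega
      refine Or.inr ⟨this.2.2.2, ?_⟩
      rw [Prod.Lex.le_iff]
      exact Or.inr ⟨this.2.2.1, by rw [Prod.Lex.le_iff]; exact Or.inr ⟨this.2.1, le_of_eq this.1⟩⟩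

lemma sum_pick (v : MvPolynomial (Fin 4) ℂ) (e : Fin 4 →₀ ℕ) (c : ℂ) :
    ∑ a ∈ v.support, coeff a v * (if a = e then c else 0) = coeff e v * c := by
  simp only [mul_ite, mul_zero]
  rw [Finset.sum_ite_eq' v.support e (fun a => coeff a v * c)]
  by_cases h : e ∈ v.support
  · rw [if_pos h]
  · rw [if_neg h, MvPolynomial.notMem_support_iff.mp h, zero_mul]

lemma key1 (m : ℂ) (t' : ℕ) (ht : 1 ≤ t') (v : MvPolynomial (Fin 4) ℂ)
    (hv : ∀ a ∈ v.support, degKey ⇑a ≤ degKey ![0,0,0,t']) :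
    ((aeval ![-1, -Polynomial.C m, 0, Polynomial.X] :
        MvPolynomial (Fin 4) ℂ →ₐ[ℂ] Polynomial ℂ) v).coeff (t'-1)
      = coeff (Finsupp.equivFunOnFinite.symm ![0,0,0,t'-1]) v
        - coeff (Finsupp.equivFunOnFinite.symm ![1,0,0,t'-1]) v
        - coeff (Finsupp.equivFunOnFinite.symm ![0,1,0,t'-1]) v * m := by
  conv_lhs => rw [v.as_sum]
  rw [map_sum, Polynomial.finset_sum_coeff]
  have step : ∀ a ∈ v.support,
      ((aeval ![-1, -Polynomial.C m, 0, Polynomial.X] :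
          MvPolynomial (Fin 4) ℂ →ₐ[ℂ] Polynomial ℂ) (monomial a (coeff a v))).coeff (t'-1)
      = coeff a v * (if a = Finsupp.equivFunOnFinite.symm ![0,0,0,t'-1] then (1:ℂ) else 0)
        - coeff a v * (if a = Finsupp.equivFunOnFinite.symm ![1,0,0,t'-1] then (1:ℂ) else 0)
        - coeff a v * (if a = Finsupp.equivFunOnFinite.symm ![0,1,0,t'-1] then m else 0) := by
    intro a ha
    have hsum : a 0 + a 1 + a 2 + a 3 ≤ t' := key_sum_le (hv a ha)
    rw [aeval_monomial, Finsupp.prod_fintype _ _ (fun i => pow_zero _), Fin.prod_univ_four]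
    simp only [Matrix.cons_val_zero, Matrix.cons_val_one, Matrix.head_cons,
      Matrix.cons_val_two, Matrix.tail_cons, Matrix.cons_val_three]
    have expand : ((algebraMap ℂ (Polynomial ℂ)) (coeff a v) * ((-1)^(a 0) * (-Polynomial.C m)^(a 1)
        * (0:Polynomial ℂ)^(a 2) * Polynomial.X^(a 3)))
        = Polynomial.C (coeff a v * (-1)^(a 0) * (-m)^(a 1) * (0:ℂ)^(a 2)) * Polynomial.X^(a 3) := by
      simp only [Polynomial.algebraMap_eq, map_mul, map_pow, map_neg, Polynomial.C_1,
        Polynomial.C_0, map_one]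
      ring
    rw [expand, Polynomial.coeff_C_mul, Polynomial.coeff_X_pow]
    by_cases h2 : a 2 = 0
    · by_cases h3 : a 3 = t' - 1
      · have h01 : a 0 + a 1 ≤ 1 := by omega
        simp only [h2, h3, pow_zero, mul_one, eqd_iff]
        simp only [Matrix.cons_val_zero, Matrix.cons_val_one, Matrix.head_cons,
          Matrix.cons_val_two, Matrix.tail_cons, Matrix.cons_val_three]
        rcases Nat.lt_or_ge (a 0) 1 with h0 | h0
        · rcases Nat.lt_or_ge (a 1) 1 with h1 | h1
          · -- a0 = 0, a1 = 0
            have e0 : a 0 = 0 := by omega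
            have e1 : a 1 = 0 := by omega
            simp [e0, e1, h2, h3]
          · -- a1 = 1
            have e0 : a 0 = 0 := by omega
            have e1 : a 1 = 1 := by omega
            simp [e0, e1, h2, h3]
        · -- a0 = 1
          have e0 : a 0 = 1 := by omega
          have e1 : a 1 = 0 := by omega
          simp [e0, e1, h2, h3]
      · have hne : ∀ f : Fin 4 → ℕ, f 3 = t' - 1 →
            ¬ (a = Finsupp.equivFunOnFinite.symm f) := by
          intro f hf h
          rw [eqd_iff] at h
          exact h3 (h.2.2.2.trans hf)
        rw [if_neg (hne _ rfl), if_neg (hne _ rfl), if_neg (hne _ rfl),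
          if_neg (fun h => h3 h.symm)]
        ring
    · have hne : ∀ f : Fin 4 → ℕ, f 2 = 0 → ¬ (a = Finsupp.equivFunOnFinite.symm f) := by
        intro f hf h
        rw [eqd_iff] at h
        exact h2 (h.2.2.1.trans hf)
      rw [if_neg (hne _ rfl), if_neg (hne _ rfl), if_neg (hne _ rfl), zero_pow h2]
      ring
  rw [Finset.sum_congr rfl step]
  simp only [Finset.sum_sub_distrib]
  rw [sum_pick, sum_pick, sum_pick]
  ring

lemma key2 (m : ℂ) (t' : ℕ) (ht : 1 ≤ t') (v : MvPolynomial (Fin 4) ℂ)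
    (hv : ∀ a ∈ v.support, degKey ⇑a ≤ degKey ![0,0,0,t']) :
    ((aeval ![0, 0, -1, Polynomial.X - Polynomial.C m] :
        MvPolynomial (Fin 4) ℂ →ₐ[ℂ] Polynomial ℂ) v).coeff (t'-1)
      = coeff (Finsupp.equivFunOnFinite.symm ![0,0,0,t'-1]) v
        - coeff (Finsupp.equivFunOnFinite.symm ![0,0,1,t'-1]) v
        - coeff (Finsupp.equivFunOnFinite.symm ![0,0,0,t']) v * (m * t') := by
  conv_lhs => rw [v.as_sum]
  rw [map_sum, Polynomial.finset_sum_coeff]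
  have step : ∀ a ∈ v.support,
      ((aeval ![0, 0, -1, Polynomial.X - Polynomial.C m] :
          MvPolynomial (Fin 4) ℂ →ₐ[ℂ] Polynomial ℂ) (monomial a (coeff a v))).coeff (t'-1)
      = coeff a v * (if a = Finsupp.equivFunOnFinite.symm ![0,0,0,t'-1] then (1:ℂ) else 0)
        - coeff a v * (if a = Finsupp.equivFunOnFinite.symm ![0,0,1,t'-1] then (1:ℂ) else 0)
        - coeff a v * (if a = Finsupp.equivFunOnFinite.symm ![0,0,0,t'] then m * t' else 0) := by
    intro a ha
    have hsum : a 0 + a 1 + a 2 + a 3 ≤ t' := key_sum_le (hv a ha)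
    rw [aeval_monomial, Finsupp.prod_fintype _ _ (fun i => pow_zero _), Fin.prod_univ_four]
    simp only [Matrix.cons_val_zero, Matrix.cons_val_one, Matrix.head_cons,
      Matrix.cons_val_two, Matrix.tail_cons, Matrix.cons_val_three]
    have expand : ((algebraMap ℂ (Polynomial ℂ)) (coeff a v) * ((0:Polynomial ℂ)^(a 0)
        * (0:Polynomial ℂ)^(a 1) * (-1)^(a 2) * (Polynomial.X - Polynomial.C m)^(a 3)))
        = Polynomial.C (coeff a v * (0:ℂ)^(a 0) * (0:ℂ)^(a 1) * (-1)^(a 2))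
          * (Polynomial.X + Polynomial.C (-m))^(a 3) := by
      simp only [Polynomial.algebraMap_eq, map_mul, map_pow, map_neg, Polynomial.C_1,
        Polynomial.C_0, map_one, sub_eq_add_neg]
      ring
    rw [expand, Polynomial.coeff_C_mul, Polynomial.coeff_X_add_C_pow]
    by_cases h0 : a 0 = 0
    · by_cases h1 : a 1 = 0
      · -- now case on a 3
        rcases Nat.lt_or_ge (a 3) (t'-1) with h3 | h3
        · have hch : (a 3).choose (t'-1) = 0 := Nat.choose_eq_zero_of_lt h3
          have hne : ∀ f : Fin 4 → ℕ, t' - 1 ≤ f 3 →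
              ¬ (a = Finsupp.equivFunOnFinite.symm f) := by
            intro f hf h
            rw [eqd_iff] at h
            omega
          rw [if_neg (hne _ (by simp)), if_neg (hne _ (by simp)),
            if_neg (hne _ (by simp)), hch]
          push_cast
          ring
        · rcases Nat.lt_or_ge (a 3) t' with h3' | h3'
          · -- a 3 = t' - 1
            have e3 : a 3 = t' - 1 := by omega
            have hch : (a 3).choose (t'-1) = 1 := by rw [e3, Nat.choose_self]
            have hpow : (-m)^(a 3 - (t'-1)) = 1 := by
              rw [e3, Nat.sub_self, pow_zero]
            have h2 : a 2 ≤ 1 := by omega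
            have hne3 : ¬ (a 3 = t') := by omega
            rw [hpow, hch]
            simp only [eqd_iff, Matrix.cons_val_zero, Matrix.cons_val_one, Matrix.head_cons,
              Matrix.cons_val_two, Matrix.tail_cons, Matrix.cons_val_three]
            rcases Nat.lt_or_ge (a 2) 1 with h2' | h2'
            · have e2 : a 2 = 0 := by omega
              simp [h0, h1, e2, e3, hne3]
              rw [if_neg (by omega : ¬ (t' - 1 = t'))]
              ring
            · have e2 : a 2 = 1 := by omega
              simp [h0, h1, e2, e3, hne3]
          · -- a 3 = t'
            have e3 : a 3 = t' := by omega
            have e2 : a 2 = 0 := by omega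
            have hch : (a 3).choose (t'-1) = t' := by
              rw [e3, Nat.choose_symm ht, Nat.choose_one_right]
            have hpow : (-m)^(a 3 - (t'-1)) = -m := by
              rw [e3]
              have : t' - (t'-1) = 1 := by omega
              rw [this, pow_one]
            have h3ne : ¬ (a 3 = t' - 1) := by omega
            rw [hpow, hch]
            simp only [eqd_iff, Matrix.cons_val_zero, Matrix.cons_val_one, Matrix.head_cons,
              Matrix.cons_val_two, Matrix.tail_cons, Matrix.cons_val_three]
            simp [h0, h1, e2, e3, h3ne]
            rw [if_neg (by omega : ¬ (t' = t' - 1))]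
            ring
      · have hne : ∀ f : Fin 4 → ℕ, f 1 = 0 → ¬ (a = Finsupp.equivFunOnFinite.symm f) := by
          intro f hf h
          rw [eqd_iff] at h
          exact h1 (h.2.1.trans hf)
        rw [if_neg (hne _ rfl), if_neg (hne _ rfl), if_neg (hne _ rfl), zero_pow h1]
        ring
    · have hne : ∀ f : Fin 4 → ℕ, f 0 = 0 → ¬ (a = Finsupp.equivFunOnFinite.symm f) := by
        intro f hf h
        rw [eqd_iff] at h
        exact h0 (h.1.trans hf)
      rw [if_neg (hne _ rfl), if_neg (hne _ rfl), if_neg (hne _ rfl), zero_pow h0]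
      ring
  rw [Finset.sum_congr rfl step]
  simp only [Finset.sum_sub_distrib]
  rw [sum_pick, sum_pick, sum_pick]
  ring

lemma comp1 (m : ℂ) (q : MvPolynomial (Fin 4) ℂ) :
    (aeval ![0,0,0,Polynomial.X] : MvPolynomial (Fin 4) ℂ →ₐ[ℂ] Polynomial ℂ)
      ((aeval ![X 0 - 1, X 1 - C m, X 2, X 3] :
        MvPolynomial (Fin 4) ℂ →ₐ[ℂ] MvPolynomial (Fin 4) ℂ) q)
      = (aeval ![-1, -Polynomial.C m, 0, Polynomial.X] :
          MvPolynomial (Fin 4) ℂ →ₐ[ℂ] Polynomial ℂ) q := by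
  rw [← AlgHom.comp_apply, comp_aeval]
  have hfun : (fun i => (aeval ![0,0,0,Polynomial.X] : MvPolynomial (Fin 4) ℂ →ₐ[ℂ] Polynomial ℂ)
      ((![X 0 - 1, X 1 - C m, X 2, X 3]) i))
      = ![-1, -Polynomial.C m, 0, Polynomial.X] := by
    funext i
    fin_cases i <;> simp
  rw [hfun]

lemma comp2 (m : ℂ) (q : MvPolynomial (Fin 4) ℂ) :
    (aeval ![0,0,0,Polynomial.X] : MvPolynomial (Fin 4) ℂ →ₐ[ℂ] Polynomial ℂ)
      ((aeval ![X 0, X 1, X 2 - 1, X 3 - C m] :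
        MvPolynomial (Fin 4) ℂ →ₐ[ℂ] MvPolynomial (Fin 4) ℂ) q)
      = (aeval ![0, 0, -1, Polynomial.X - Polynomial.C m] :
          MvPolynomial (Fin 4) ℂ →ₐ[ℂ] Polynomial ℂ) q := by
  rw [← AlgHom.comp_apply, comp_aeval]
  have hfun : (fun i => (aeval ![0,0,0,Polynomial.X] : MvPolynomial (Fin 4) ℂ →ₐ[ℂ] Polynomial ℂ)
      ((![X 0, X 1, X 2 - 1, X 3 - C m]) i))
      = ![0, 0, -1, Polynomial.X - Polynomial.C m] := by
    funext i
    fin_cases i <;> simp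
  rw [hfun]

lemma vand (l1 l2 : ℂ) (h2 : l2 ≠ 0) (h12 : l1 ≠ l2) (A B G K : ℂ)
    (e0 : A + G = 0)
    (e1 : l1*(A + B) + l2*(G + K) = 0)
    (e2 : l1^2*(A + 2*B) + l2^2*(G + 2*K) = 0)
    (e3 : l1^3*(A + 3*B) + l2^3*(G + 3*K) = 0) : K = 0 := by
  have key : l2*(l1-l2)^2 * K = 0 := by
    linear_combination (l1^2+2*l1*l2) * e1 - (l2+2*l1) * e2 + e3 - (l1^2*l2) * e0
  have hne : l2*(l1-l2)^2 ≠ 0 :=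
    mul_ne_zero h2 (pow_ne_zero _ (sub_ne_zero.mpr h12))
  exact (mul_eq_zero.mp key).resolve_left hne

theorem stmt19 (l1 l2 s1 s2 : ℂ) (h1 : l1 ≠ 0) (h2 : l2 ≠ 0) (h12 : l1 ≠ l2)
    (hs1 : s1 ≠ 0) (hs2 : s2 ≠ 0) (t' : ℕ) (ht : 0 < t')
    (v : MvPolynomial (Fin 4) ℂ) (hv : hasDeg v ![0, 0, 0, t']) :
    ∃ m : ℤ, m ∈ ({0, 1, 2, 3} : Set ℤ) ∧
      hasDeg (Iop l1 l2 s1 s2 m v - (l1 ^ m * s1) • v - (l2 ^ m * s2) • v)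
        ![0, 0, 0, t' - 1] := by
  obtain ⟨hc, hsup⟩ := hv
  have hsum : ∀ a ∈ v.support, a 0 + a 1 + a 2 + a 3 ≤ t' :=
    fun a ha => key_sum_le (hsup a ha)
  set W : ℤ → MvPolynomial (Fin 4) ℂ := fun m =>
    Iop l1 l2 s1 s2 m v - (l1 ^ m * s1) • v - (l2 ^ m * s2) • v with hWdef
  have hW : ∀ m : ℤ, W m
      = (l1 ^ m * s1) • ((aeval ![X 0 - 1, X 1 - C ((m:ℤ):ℂ), X 2, X 3] :
          MvPolynomial (Fin 4) ℂ →ₐ[ℂ] MvPolynomial (Fin 4) ℂ) v - v)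
      + (l2 ^ m * s2) • ((aeval ![X 0, X 1, X 2 - 1, X 3 - C ((m:ℤ):ℂ)] :
          MvPolynomial (Fin 4) ℂ →ₐ[ℂ] MvPolynomial (Fin 4) ℂ) v - v) := by
    intro m
    simp only [hWdef, Iop, LinearMap.add_apply, LinearMap.smul_apply,
      AlgHom.toLinearMap_apply, smul_sub]
    abel
  -- support bound, for every m
  have hSupp : ∀ m : ℤ, ∀ a ∈ (W m).support, degKey ⇑a ≤ degKey ![0,0,0,t'-1] := by
    intro m a ha
    apply key_le_of_sum
    have htd : (W m).totalDegree ≤ t' - 1 := by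
      rw [hW m]
      refine le_trans (totalDegree_add _ _) (max_le ?_ ?_)
      · refine le_trans (totalDegree_smul_le _ _) ?_
        have hg : (![X 0 - 1, X 1 - C ((m:ℤ):ℂ), X 2, X 3] : Fin 4 → MvPolynomial (Fin 4) ℂ)
            = fun i => X i - C ((![1, ((m:ℤ):ℂ), 0, 0]) i) := by
          funext i
          fin_cases i <;> simp
        rw [hg]
        exact tdSub _ v t' hsum
      · refine le_trans (totalDegree_smul_le _ _) ?_
        have hg : (![X 0, X 1, X 2 - 1, X 3 - C ((m:ℤ):ℂ)] : Fin 4 → MvPolynomial (Fin 4) ℂ)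
            = fun i => X i - C ((![0, 0, 1, ((m:ℤ):ℂ)]) i) := by
          funext i
          fin_cases i <;> simp
        rw [hg]
        exact tdSub _ v t' hsum
    have h := le_trans (le_totalDegree ha) htd
    rw [Finsupp.sum_fintype _ _ (fun i => rfl), Fin.sum_univ_four] at h
    exact h
  -- coefficient formula
  set cA := coeff (Finsupp.equivFunOnFinite.symm ![1,0,0,t'-1]) v with hcA
  set cB := coeff (Finsupp.equivFunOnFinite.symm ![0,1,0,t'-1]) v with hcB
  set cG := coeff (Finsupp.equivFunOnFinite.symm ![0,0,1,t'-1]) v with hcG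
  set cT := coeff (Finsupp.equivFunOnFinite.symm ![0,0,0,t']) v with hcT
  have hF : ∀ m : ℤ, coeff (Finsupp.equivFunOnFinite.symm ![0,0,0,t'-1]) (W m)
      = l1 ^ m * (-(s1*cA) + ((m:ℤ):ℂ) * (-(s1*cB)))
        + l2 ^ m * (-(s2*cG) + ((m:ℤ):ℂ) * (-(s2*cT*t'))) := by
    intro m
    rw [hW m]
    rw [coeff_add, coeff_smul, coeff_smul, coeff_sub, coeff_sub,
      coeff_0003 (t'-1), coeff_0003 (t'-1), coeff_0003 (t'-1), comp1, comp2,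
      key1 _ t' ht v hsup, key2 _ t' ht v hsup]
    rw [← coeff_0003 (t'-1)]
    rw [← hcA, ← hcB, ← hcG, ← hcT]
    push_cast
    simp only [smul_eq_mul]
    ring
  -- pick a good m
  by_contra hcon
  push_neg at hcon
  have hzero : ∀ m : ℤ, m ∈ ({0,1,2,3} : Set ℤ) →
      coeff (Finsupp.equivFunOnFinite.symm ![0,0,0,t'-1]) (W m) = 0 := by
    intro m hm
    by_contra hne
    exact hcon m hm ⟨hne, hSupp m⟩
  have E0 := hzero 0 (by norm_num)
  have E1 := hzero 1 (by norm_num)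
  have E2 := hzero 2 (by norm_num)
  have E3 := hzero 3 (by norm_num)
  rw [hF] at E0 E1 E2 E3
  simp only [zpow_zero, zpow_one, Int.cast_zero, Int.cast_one, Int.cast_ofNat] at E0 E1 E2 E3
  have hz2 : ∀ x : ℂ, x ^ (2:ℤ) = x^2 := fun x => by
    rw [show ((2:ℤ)) = ((2:ℕ):ℤ) from rfl, zpow_natCast]
  have hz3 : ∀ x : ℂ, x ^ (3:ℤ) = x^3 := fun x => by
    rw [show ((3:ℤ)) = ((3:ℕ):ℤ) from rfl, zpow_natCast]
  rw [hz2, hz2] at E2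
  rw [hz3, hz3] at E3
  have hK : -(s2*cT*t') = 0 := by
    apply vand l1 l2 h2 h12 (-(s1*cA)) (-(s1*cB)) (-(s2*cG)) (-(s2*cT*t'))
    · linear_combination E0
    · linear_combination E1
    · linear_combination E2
    · linear_combination E3
  have ht' : (t' : ℂ) ≠ 0 := Nat.cast_ne_zero.mpr ht.ne'
  have hzz : s2 * cT * (t':ℂ) = 0 := by linear_combination -hK
  exact (mul_ne_zero (mul_ne_zero hs2 hc) ht') hzz
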